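/- Universal approximation (Stone–Weierstrass consequence): if G : ℝ → ℝ is continuous and non-constant, then the algebra of functions of the form f(x) = Σ_{j=1}^q β_j Π_{k=1}^{l_j} G(w_{jk}·x + b_{jk}) is uniformly dense in C(K, ℝ) for every compact K ⊆ ℝ^r. -/

import Mathlib

/-- The class `Σ∏ʳ(G)` of network output functions: finite linear combinations of
finite products of `G` composed with affine maps `ℝʳ → ℝ`. -/
def SigmaPi (r : ℕ) (G : ℝ → ℝ) : Set ((Fin r → ℝ) → ℝ) :=
  {f | ∃ (q : ℕ) (β : Fin q → ℝ) (l : Fin q → ℕ)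
        (w : (j : Fin q) → Fin (l j) → (Fin r → ℝ)) (b : (j : Fin q) → Fin (l j) → ℝ),
      f = fun x => ∑ j : Fin q, β j * ∏ k : Fin (l j), G (∑ i : Fin r, w j k i * x i + b j k)}

lemma sp_general {r : ℕ} {G : ℝ → ℝ} {ι : Type} [Fintype ι] (β : ι → ℝ) (l : ι → ℕ)
    (w : (j : ι) → Fin (l j) → (Fin r → ℝ)) (b : (j : ι) → Fin (l j) → ℝ) :
    (fun x => ∑ j : ι, β j * ∏ k : Fin (l j), G (∑ i : Fin r, w j k i * x i + b j k))
      ∈ SigmaPi r G := by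
  let e := Fintype.equivFin ι
  refine ⟨Fintype.card ι, β ∘ e.symm, l ∘ e.symm, fun j => w (e.symm j), fun j => b (e.symm j), ?_⟩
  funext x
  exact (Fintype.sum_equiv e.symm _ _ fun j => rfl).symm

lemma sp_const (r : ℕ) (G : ℝ → ℝ) (c : ℝ) : (fun _ => c) ∈ SigmaPi r G := by
  have h := sp_general (r := r) (G := G) (ι := Fin 1) (fun _ => c) (fun _ => 0)
    (fun _ => Fin.elim0) (fun _ => Fin.elim0)
  simpa using h

lemma sp_gen (r : ℕ) (G : ℝ → ℝ) (w : Fin r → ℝ) (c : ℝ) :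
    (fun x => G (∑ i : Fin r, w i * x i + c)) ∈ SigmaPi r G := by
  have h := sp_general (r := r) (G := G) (ι := Fin 1) (fun _ => 1) (fun _ => 1)
    (fun _ _ => w) (fun _ _ => c)
  simpa using h

lemma sp_add (r : ℕ) (G : ℝ → ℝ) {f g : (Fin r → ℝ) → ℝ}
    (hf : f ∈ SigmaPi r G) (hg : g ∈ SigmaPi r G) : (fun x => f x + g x) ∈ SigmaPi r G := by
  obtain ⟨q₁, β₁, l₁, w₁, b₁, rfl⟩ := hf
  obtain ⟨q₂, β₂, l₂, w₂, b₂, rfl⟩ := hg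
  have h := sp_general (r := r) (G := G) (ι := Fin q₁ ⊕ Fin q₂)
    (Sum.elim β₁ β₂) (Sum.elim l₁ l₂)
    (fun s => Sum.rec (motive := fun s => Fin (Sum.elim l₁ l₂ s) → (Fin r → ℝ)) w₁ w₂ s)
    (fun s => Sum.rec (motive := fun s => Fin (Sum.elim l₁ l₂ s) → ℝ) b₁ b₂ s)
  convert h using 2 with x
  rw [Fintype.sum_sum_type]
  rfl

lemma sp_mul (r : ℕ) (G : ℝ → ℝ) {f g : (Fin r → ℝ) → ℝ}
    (hf : f ∈ SigmaPi r G) (hg : g ∈ SigmaPi r G) : (fun x => f x * g x) ∈ SigmaPi r G := by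
  obtain ⟨q₁, β₁, l₁, w₁, b₁, rfl⟩ := hf
  obtain ⟨q₂, β₂, l₂, w₂, b₂, rfl⟩ := hg
  have h := sp_general (r := r) (G := G) (ι := Fin q₁ × Fin q₂)
    (fun p => β₁ p.1 * β₂ p.2) (fun p => l₁ p.1 + l₂ p.2)
    (fun p m => Sum.elim (w₁ p.1) (w₂ p.2) (finSumFinEquiv.symm m))
    (fun p m => Sum.elim (b₁ p.1) (b₂ p.2) (finSumFinEquiv.symm m))
  convert h using 2 with x
  rw [Finset.sum_mul_sum, Fintype.sum_prod_type]
  refine Finset.sum_congr rfl fun j _ => Finset.sum_congr rfl fun k _ => ?_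
  have p : Fin q₁ × Fin q₂ := (j, k)
  rw [Fintype.prod_equiv (finSumFinEquiv (m := l₁ j) (n := l₂ k)).symm _
    (fun s => G (∑ i : Fin r, Sum.elim (w₁ j) (w₂ k) s i * x i + Sum.elim (b₁ j) (b₂ k) s))
    (fun m => rfl)]
  rw [Fintype.prod_sum_type]
  simp only [Sum.elim_inl, Sum.elim_inr]
  ring

/-- Universal approximation (Hornik–Stinchcombe–White / Stone–Weierstrass): if
`G` is continuous and non-constant, then `Σ∏ʳ(G)` is uniformly dense in
`C(K, ℝ)` for every compact `K ⊆ ℝʳ`. -/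
theorem stmt16 (r : ℕ) (G : ℝ → ℝ) (hG : Continuous G) (hnc : ∃ a b : ℝ, G a ≠ G b)
    (K : Set (Fin r → ℝ)) (hK : IsCompact K)
    (f : (Fin r → ℝ) → ℝ) (hf : ContinuousOn f K) (ε : ℝ) (hε : 0 < ε) :
    ∃ h ∈ SigmaPi r G, ∀ x ∈ K, |f x - h x| < ε := by
  obtain ⟨a, b0, hab⟩ := hnc
  haveI : CompactSpace K := isCompact_iff_compactSpace.mp hK
  set S : Set C(K, ℝ) := {φ | ∃ h ∈ SigmaPi r G, ∀ x : K, φ x = h x} with hS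
  have hsep : (Algebra.adjoin ℝ S).SeparatesPoints := by
    intro x y hxy
    have hne : (x : Fin r → ℝ) ≠ (y : Fin r → ℝ) := fun h => hxy (Subtype.ext h)
    obtain ⟨i, hi⟩ := Function.ne_iff.mp hne
    set t : ℝ := (a - b0) / ((x : Fin r → ℝ) i - (y : Fin r → ℝ) i) with ht
    set w : Fin r → ℝ := fun i' => if i' = i then t else 0 with hw
    set c : ℝ := a - t * (x : Fin r → ℝ) i with hc
    have hsum : ∀ z : Fin r → ℝ, ∑ i', w i' * z i' = t * z i := by
      intro z
      simp [hw, ite_mul, Finset.sum_ite_eq']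
    have hcont : Continuous fun z : K => G (∑ i', w i' * (z : Fin r → ℝ) i' + c) := by
      apply hG.comp
      exact (continuous_finset_sum _ fun i' _ =>
        continuous_const.mul ((continuous_apply i').comp continuous_subtype_val)).add
        continuous_const
    refine ⟨fun z : K => G (∑ i', w i' * (z : Fin r → ℝ) i' + c),
      ⟨⟨fun z : K => G (∑ i', w i' * (z : Fin r → ℝ) i' + c), hcont⟩,
        Algebra.subset_adjoin ⟨_, sp_gen r G w c, fun z => rfl⟩, rfl⟩, ?_⟩
    show G (∑ i', w i' * (x : Fin r → ℝ) i' + c) ≠ G (∑ i', w i' * (y : Fin r → ℝ) i' + c)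
    rw [hsum, hsum]
    have hd : (x : Fin r → ℝ) i - (y : Fin r → ℝ) i ≠ 0 := sub_ne_zero.mpr hi
    have hx : t * (x : Fin r → ℝ) i + c = a := by rw [hc]; ring
    have hy : t * (y : Fin r → ℝ) i + c = b0 := by
      rw [hc, ht]
      field_simp
      ring
    rw [hx, hy]
    exact hab
  have hAll : ∀ g ∈ Algebra.adjoin ℝ S, ∃ h ∈ SigmaPi r G, ∀ x : K, g x = h x := by
    intro g hg
    induction hg using Algebra.adjoin_induction with
    | mem φ hφ => exact hφ
    | algebraMap c => exact ⟨fun _ => c, sp_const r G c, fun x => rfl⟩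
    | add u v hu hv ihu ihv =>
      obtain ⟨h₁, h₁m, h₁e⟩ := ihu
      obtain ⟨h₂, h₂m, h₂e⟩ := ihv
      exact ⟨fun x => h₁ x + h₂ x, sp_add r G h₁m h₂m,
        fun x => by simp [h₁e x, h₂e x]⟩
    | mul u v hu hv ihu ihv =>
      obtain ⟨h₁, h₁m, h₁e⟩ := ihu
      obtain ⟨h₂, h₂m, h₂e⟩ := ihv
      exact ⟨fun x => h₁ x * h₂ x, sp_mul r G h₁m h₂m,
        fun x => by simp [h₁e x, h₂e x]⟩
  obtain ⟨⟨g, hgmem⟩, hgapprox⟩ :=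
    ContinuousMap.exists_mem_subalgebra_near_continuous_of_separatesPoints
      (Algebra.adjoin ℝ S) hsep (K.restrict f) hf.restrict ε hε
  obtain ⟨h, hmem, he⟩ := hAll g hgmem
  refine ⟨h, hmem, fun x hx => ?_⟩
  have h1 := hgapprox ⟨x, hx⟩
  rw [he ⟨x, hx⟩] at h1
  rw [abs_sub_comm]
  rw [Real.norm_eq_abs] at h1
  exact h1
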